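/- Let k ≥ 3 be an odd integer, let c > 0, let s be an integer with (k+1)/2 ≤ s ≤ k−1, and let a_1 < ⋯ < a_s be distinct real numbers. Then every nonzero solution (A_1, …, A_s) ∈ ℝ^s of the right-sided kernel packet system on a_1, …, a_s satisfies A_1 ≠ 0. -/

import Mathlib

open Polynomial


lemma aux_deriv (P Q : ℝ[X]) (d x : ℝ) :
    HasDerivAt (fun y => P.eval y + Q.eval y * Real.exp (d * y))
      ((derivative P).eval x + ((derivative Q) + C d * Q).eval x * Real.exp (d * x)) x := by
  have h1 : HasDerivAt (fun y => P.eval y) ((derivative P).eval x) x := P.hasDerivAt x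
  have h2 : HasDerivAt (fun y => Q.eval y) ((derivative Q).eval x) x := Q.hasDerivAt x
  have h3 : HasDerivAt (fun y => Real.exp (d * y)) (d * Real.exp (d * x)) x := by
    have := ((hasDerivAt_id' x).const_mul d).exp
    convert this using 1
    ring
  have : HasDerivAt (fun y => P.eval y + Q.eval y * Real.exp (d * y))
      ((derivative P).eval x + ((derivative Q).eval x * Real.exp (d * x)
        + Q.eval x * (d * Real.exp (d * x)))) x := h1.add (h2.mul h3)
  convert this using 1
  simp only [eval_add, eval_mul, eval_C]
  ring

lemma aux_Q2_ne (Q : ℝ[X]) (d : ℝ) (hd : d ≠ 0) (hQ : Q ≠ 0) :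
    derivative Q + C d * Q ≠ 0 := by
  intro h
  have h1 : (derivative Q + C d * Q).coeff Q.natDegree = d * Q.coeff Q.natDegree := by
    rw [coeff_add, coeff_C_mul, Polynomial.coeff_derivative,
      Polynomial.coeff_eq_zero_of_natDegree_lt (by omega)]
    ring
  rw [h] at h1
  simp only [coeff_zero] at h1
  have h2 : Q.coeff Q.natDegree ≠ 0 := fun hz => hQ (Polynomial.leadingCoeff_eq_zero.mp hz)
  rcases mul_eq_zero.mp h1.symm with h3 | h3
  · exact hd h3
  · exact h2 h3

lemma aux_deriv_ne (P : ℝ[X]) (hP : P.natDegree ≠ 0) : derivative P ≠ 0 ∧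
    (derivative P).natDegree = P.natDegree - 1 := by
  have hP0 : P ≠ 0 := fun h => hP (by simp [h])
  have h1 : P.natDegree - 1 + 1 = P.natDegree := by omega
  have hne : (derivative P).coeff (P.natDegree - 1) ≠ 0 := by
    rw [Polynomial.coeff_derivative, h1]
    apply mul_ne_zero (Polynomial.leadingCoeff_ne_zero.mpr hP0)
    positivity
  have hd0 : derivative P ≠ 0 := by
    intro h; rw [h] at hne; simp at hne
  exact ⟨hd0, le_antisymm (Polynomial.natDegree_derivative_le P)
    (Polynomial.le_natDegree_of_ne_zero hne)⟩

/-- Zero counting for exponential polynomials `P(x) + Q(x) e^{dx}`. -/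
lemma expPoly_zeros (d : ℝ) (hd : d ≠ 0) :
    ∀ (n : ℕ) (P Q : ℝ[X]), (P ≠ 0 ∨ Q ≠ 0) →
    ∀ x : Fin n → ℝ, StrictMono x →
    (∀ i, P.eval (x i) + Q.eval (x i) * Real.exp (d * x i) = 0) →
    n < (if P = 0 then 0 else P.natDegree + 1) + (if Q = 0 then 0 else Q.natDegree + 1) := by
  intro n
  induction n with
  | zero =>
    intro P Q hPQ x hx hz
    rcases hPQ with h | h
    · rw [if_neg h]; omega
    · rw [if_neg h]; omega
  | succ n IH =>
    intro P Q hPQ x hx hz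
    by_cases hP : P = 0
    · -- P = 0 : the x i are roots of Q
      have hQ : Q ≠ 0 := hPQ.resolve_left (not_not_intro hP)
      have hroot : ∀ i, Q.IsRoot (x i) := by
        intro i
        have h := hz i
        rw [hP] at h
        simp only [eval_zero, zero_add] at h
        rcases mul_eq_zero.mp h with h | h
        · exact h
        · exact absurd h (Real.exp_ne_zero _)
      have hsub : Finset.univ.image x ⊆ Q.roots.toFinset := by
        intro y hy
        obtain ⟨i, _, rfl⟩ := Finset.mem_image.mp hy
        rw [Multiset.mem_toFinset, Polynomial.mem_roots hQ]
        exact hroot i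
      have hcard : n + 1 ≤ Q.natDegree := by
        have h1 : (Finset.univ.image x).card = n + 1 := by
          rw [Finset.card_image_of_injective _ hx.injective, Finset.card_univ, Fintype.card_fin]
        have h2 := Finset.card_le_card hsub
        have h3 := Multiset.toFinset_card_le Q.roots
        have h4 := Polynomial.card_roots' Q
        omega
      rw [if_pos hP, if_neg hQ]
      omega
    · by_cases hQ : Q = 0 ∧ P.natDegree = 0
      · -- constant nonzero function cannot vanish
        exfalso
        obtain ⟨hQ0, hdeg⟩ := hQ
        have h0 := hz ⟨0, Nat.succ_pos n⟩
        rw [hQ0] at h0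
        simp only [eval_zero, zero_mul, add_zero] at h0
        apply hP
        have hPC := Polynomial.eq_C_of_natDegree_eq_zero hdeg
        rw [hPC] at h0 ⊢
        rw [eval_C] at h0
        rw [h0, map_zero]
      · -- Rolle step
        set P2 := derivative P with hP2
        set Q2 := derivative Q + C d * Q with hQ2
        have hstep : ∀ i : Fin n, ∃ y ∈ Set.Ioo (x i.castSucc) (x i.succ),
            P2.eval y + Q2.eval y * Real.exp (d * y) = 0 := by
          intro i
          have hlt : x i.castSucc < x i.succ := hx Fin.castSucc_lt_succ
          refine exists_hasDerivAt_eq_zero (f := fun y => P.eval y + Q.eval y * Real.exp (d * y))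
            (f' := fun y => P2.eval y + Q2.eval y * Real.exp (d * y)) hlt ?_
            ((hz _).trans (hz _).symm) ?_
          · apply Continuous.continuousOn
            exact (P.continuous).add ((Q.continuous).mul
              (Real.continuous_exp.comp (continuous_const.mul continuous_id)))
          · intro y _
            exact aux_deriv P Q d y
        choose y hy1 hy2 using hstep
        have hy_mono : StrictMono y := by
          intro i j hij
          calc y i < x i.succ := (hy1 i).2
            _ ≤ x j.castSucc := by
                apply hx.monotone
                rw [Fin.le_def]
                simp only [Fin.val_succ, Fin.coe_castSucc]
                exact hij
            _ < y j := (hy1 j).1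
        have hPQ2 : P2 ≠ 0 ∨ Q2 ≠ 0 := by
          by_cases hdeg : P.natDegree = 0
          · right; exact aux_Q2_ne Q d hd (fun h => hQ ⟨h, hdeg⟩)
          · left; exact (aux_deriv_ne P hdeg).1
        have hIH := IH P2 Q2 hPQ2 y hy_mono hy2
        have hQt : (if Q2 = 0 then 0 else Q2.natDegree + 1)
            ≤ (if Q = 0 then 0 else Q.natDegree + 1) := by
          by_cases hQ0 : Q = 0
          · have : Q2 = 0 := by rw [hQ2, hQ0]; simp
            simp [this, hQ0]
          · rw [if_neg hQ0, if_neg (aux_Q2_ne Q d hd hQ0)]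
            have h1 : Q2.natDegree ≤ Q.natDegree := by
              apply le_trans (Polynomial.natDegree_add_le _ _)
              apply max_le
              · exact le_trans (Polynomial.natDegree_derivative_le Q) (Nat.sub_le _ _)
              · exact Polynomial.natDegree_C_mul_le d Q
            omega
        have hPt : (if P2 = 0 then 0 else P2.natDegree + 1) + 1
            ≤ (if P = 0 then 0 else P.natDegree + 1) := by
          rw [if_neg hP]
          by_cases hdeg : P.natDegree = 0
          · have : P2 = 0 := by
              rw [hP2, Polynomial.eq_C_of_natDegree_eq_zero hdeg]; simp
            rw [if_pos this]
            omega
          · obtain ⟨h1, h2⟩ := aux_deriv_ne P hdeg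
            rw [if_neg h1, h2]
            omega
        calc n + 1 < ((if P2 = 0 then 0 else P2.natDegree + 1)
              + (if Q2 = 0 then 0 else Q2.natDegree + 1)) + 1 := Nat.succ_lt_succ hIH
          _ = ((if P2 = 0 then 0 else P2.natDegree + 1) + 1)
              + (if Q2 = 0 then 0 else Q2.natDegree + 1) := by ring
          _ ≤ _ := add_le_add hPt hQt

/-- A nonzero combination of the row functions cannot vanish at all `r` points. -/
lemma kp_rows_indep (t r : ℕ) (ht : 1 ≤ t) (htr : t ≤ r) (c : ℝ) (hc : 0 < c)
    (b : Fin r → ℝ) (hb : StrictMono b) (w : Fin r → ℝ) (hw0 : w ≠ 0)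
    (hw : ∀ j, ∑ i : Fin r, (if (i : ℕ) < t then b j ^ (i : ℕ) * Real.exp (-(c * b j))
      else b j ^ ((i : ℕ) - t) * Real.exp (c * b j)) * w i = 0) : False := by
  set P : ℝ[X] := ∑ i : Fin r, if (i : ℕ) < t then C (w i) * X ^ (i : ℕ) else 0 with hPdef
  set Q : ℝ[X] := ∑ i : Fin r, if (i : ℕ) < t then 0 else C (w i) * X ^ ((i : ℕ) - t) with hQdef
  -- vanishing of P + Q e^{2cx} at the points b j
  have hvanish : ∀ j : Fin r, P.eval (b j) + Q.eval (b j) * Real.exp (2 * c * b j) = 0 := by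
    intro j
    have hsum : P.eval (b j) * Real.exp (-(c * b j)) + Q.eval (b j) * Real.exp (c * b j) = 0 := by
      rw [hPdef, hQdef, Polynomial.eval_finset_sum, Polynomial.eval_finset_sum,
        Finset.sum_mul, Finset.sum_mul, ← Finset.sum_add_distrib, ← hw j]
      apply Finset.sum_congr rfl
      intro i _
      by_cases hi : (i : ℕ) < t
      · rw [if_pos hi, if_pos hi, if_pos hi]
        simp only [eval_mul, eval_C, eval_pow, eval_X, eval_zero]
        ring
      · rw [if_neg hi, if_neg hi, if_neg hi]
        simp only [eval_mul, eval_C, eval_pow, eval_X, eval_zero]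
        ring
    have h1 : Real.exp (-(c * b j)) * Real.exp (c * b j) = 1 := by
      rw [← Real.exp_add]; simp
    have h2 : Real.exp (2 * c * b j) = Real.exp (c * b j) * Real.exp (c * b j) := by
      rw [← Real.exp_add]; ring_nf
    rw [h2]
    linear_combination Real.exp (c * b j) * hsum - P.eval (b j) * h1
  -- P, Q not both zero
  have hPQ : P ≠ 0 ∨ Q ≠ 0 := by
    obtain ⟨i, hi⟩ := Function.ne_iff.mp hw0
    by_cases hit : (i : ℕ) < t
    · left
      intro hP0
      have hco : P.coeff (i : ℕ) = w i := by
        rw [hPdef, Polynomial.finset_sum_coeff]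
        rw [Finset.sum_eq_single i]
        · rw [if_pos hit, coeff_C_mul, coeff_X_pow, if_pos rfl, mul_one]
        · intro i' _ hne
          by_cases hi't : (i' : ℕ) < t
          · rw [if_pos hi't, coeff_C_mul, coeff_X_pow,
              if_neg (fun h => hne (Fin.ext h.symm)), mul_zero]
          · rw [if_neg hi't, coeff_zero]
        · intro h; exact absurd (Finset.mem_univ i) h
      rw [hP0] at hco
      exact hi (by simpa using hco.symm)
    · right
      intro hQ0
      have hco : Q.coeff ((i : ℕ) - t) = w i := by
        rw [hQdef, Polynomial.finset_sum_coeff]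
        rw [Finset.sum_eq_single i]
        · rw [if_neg hit, coeff_C_mul, coeff_X_pow, if_pos rfl, mul_one]
        · intro i' _ hne
          by_cases hi't : (i' : ℕ) < t
          · rw [if_pos hi't, coeff_zero]
          · rw [if_neg hi't, coeff_C_mul, coeff_X_pow]
            rw [if_neg, mul_zero]
            intro h
            exact hne (Fin.ext (by omega))
        · intro h; exact absurd (Finset.mem_univ i) h
      rw [hQ0] at hco
      exact hi (by simpa using hco.symm)
  -- degree bounds
  have hPdeg : P.natDegree ≤ t - 1 := by
    rw [hPdef]
    apply Polynomial.natDegree_sum_le_of_forall_le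
    intro i _
    by_cases hi : (i : ℕ) < t
    · rw [if_pos hi]
      exact le_trans (Polynomial.natDegree_C_mul_le _ _) (by rw [natDegree_X_pow]; omega)
    · rw [if_neg hi]; simp
  have hQbound : (if Q = 0 then 0 else Q.natDegree + 1) ≤ r - t := by
    by_cases htr' : t = r
    · have hQ0 : Q = 0 := by
        rw [hQdef]
        apply Finset.sum_eq_zero
        intro i _
        rw [if_pos (by omega : (i : ℕ) < t)]
      rw [if_pos hQ0]; omega
    · have hQdeg : Q.natDegree ≤ r - t - 1 := by
        rw [hQdef]
        apply Polynomial.natDegree_sum_le_of_forall_le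
        intro i _
        by_cases hi : (i : ℕ) < t
        · rw [if_pos hi]; simp
        · rw [if_neg hi]
          refine le_trans (Polynomial.natDegree_C_mul_le _ _) ?_
          rw [natDegree_X_pow]
          have := i.isLt
          omega
      split_ifs
      · omega
      · omega
  have hkey := expPoly_zeros (2 * c) (by positivity) r P Q hPQ b hb hvanish
  have hPbound : (if P = 0 then 0 else P.natDegree + 1) ≤ t := by
    split_ifs
    · omega
    · omega
  omega



/-- The right-sided kernel packet system on points `a_1 < ⋯ < a_s`, with parameters
`k` (odd, `≥ 3`) and `c > 0`: the `(k-1)/2` equations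
`∑_j A_j a_j^l exp(-c a_j) = 0` for `l = 0, …, (k-3)/2`, together with (only when
`s ≥ (k+3)/2`) the auxiliary equations `∑_j A_j a_j^r exp(c a_j) = 0` for
`r = 0, …, s - (k+3)/2`; in total `s - 1` equations. -/
def RightSidedKPSystem (k : ℕ) (c : ℝ) {s : ℕ} (a : Fin s → ℝ) (A : Fin s → ℝ) : Prop :=
  (∀ l ≤ (k - 3) / 2, ∑ j, A j * a j ^ l * Real.exp (-(c * a j)) = 0) ∧
  (∀ r : ℕ, r + (k + 3) / 2 ≤ s → ∑ j, A j * a j ^ r * Real.exp (c * a j) = 0)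

/-- For odd `k ≥ 3`, `c > 0`, `(k+1)/2 ≤ s ≤ k-1`, and points
`a_1 < ⋯ < a_s`, every nonzero solution `A` of the right-sided kernel packet system
satisfies `A_1 ≠ 0`. -/
theorem right_sided_kp_first_coefficient_ne_zero
    (k : ℕ) (hk3 : 3 ≤ k) (hkodd : Odd k) (c : ℝ) (hc : 0 < c)
    (s : ℕ) (hs1 : (k + 1) / 2 ≤ s) (hs2 : s ≤ k - 1)
    (a : Fin s → ℝ) (ha : StrictMono a)
    (A : Fin s → ℝ) (hA0 : A ≠ 0) (hA : RightSidedKPSystem k c a A) :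
    A ⟨0, by omega⟩ ≠ 0 := by
  intro h0
  obtain ⟨t, hk⟩ := hkodd
  have ht1 : 1 ≤ t := by omega
  obtain ⟨r, rfl⟩ : ∃ r, s = r + 1 := ⟨s - 1, by omega⟩
  have htr : t ≤ r := by omega
  have h00 : A 0 = 0 := by
    have : (0 : Fin (r + 1)) = ⟨0, by omega⟩ := rfl
    rw [this]; exact h0
  set b : Fin r → ℝ := fun j => a j.succ with hbdef
  have hb : StrictMono b := fun i j hij => ha (Fin.succ_lt_succ_iff.mpr hij)
  set M : Matrix (Fin r) (Fin r) ℝ := Matrix.of fun i j =>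
    if (i : ℕ) < t then b j ^ (i : ℕ) * Real.exp (-(c * b j))
    else b j ^ ((i : ℕ) - t) * Real.exp (c * b j) with hMdef
  set A' : Fin r → ℝ := fun j => A j.succ with hA'def
  have hA'ne : A' ≠ 0 := by
    intro h
    apply hA0
    funext j
    refine Fin.cases ?_ ?_ j
    · exact h00
    · intro i
      exact congrFun h i
  have hMA : M.mulVec A' = 0 := by
    funext i
    simp only [Matrix.mulVec, dotProduct, Pi.zero_apply, hMdef, Matrix.of_apply,
      hA'def]
    by_cases hi : (i : ℕ) < t
    · have heq := hA.1 (i : ℕ) (by omega)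
      rw [Fin.sum_univ_succ, h00, zero_mul, zero_mul, zero_add] at heq
      rw [← heq]
      apply Finset.sum_congr rfl
      intro j _
      rw [if_pos hi]
      ring
    · have heq := hA.2 ((i : ℕ) - t) (by have := i.isLt; omega)
      rw [Fin.sum_univ_succ, h00, zero_mul, zero_mul, zero_add] at heq
      rw [← heq]
      apply Finset.sum_congr rfl
      intro j _
      rw [if_neg hi]
      ring
  have hdet : M.det = 0 := Matrix.exists_mulVec_eq_zero_iff.mp ⟨A', hA'ne, hMA⟩
  have hdetT : M.transpose.det = 0 := by rw [Matrix.det_transpose]; exact hdet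
  obtain ⟨w, hw0, hw⟩ := Matrix.exists_mulVec_eq_zero_iff.mpr hdetT
  apply kp_rows_indep t r ht1 htr c hc b hb w hw0
  intro j
  have h := congrFun hw j
  simp only [Matrix.mulVec, dotProduct, Matrix.transpose_apply, Pi.zero_apply,
    hMdef, Matrix.of_apply] at h
  exact h
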